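/- For all n ∈ ℕ, k ∈ ℕ, and every complex number θ, one has L_{n,k}(e^{iθ}) / e^{i n θ/2} = (2i)^n · (d/dθ)^k (sin(θ/2))^n, i.e. L_{n,k}(e^{iθ}) = e^{i n θ/2} · (2i)^n · f^{(k)}(θ) where f(θ) = (sin(θ/2))^n and f^{(k)} denotes its k-th complex derivative. -/

import Mathlib

open Finset

lemma expderiv (a : ℂ) (k : ℕ) :
    iteratedDeriv k (fun x : ℂ => Complex.exp (a * x)) = fun θ => a ^ k * Complex.exp (a * θ) := by
  induction k with
  | zero => simp
  | succ k ih =>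
    rw [iteratedDeriv_succ, ih]
    funext θ
    have h : HasDerivAt (fun θ : ℂ => a ^ k * Complex.exp (a * θ))
        (a ^ k * (Complex.exp (a * θ) * (a * 1))) θ := by
      simpa using
      ((((hasDerivAt_id θ).const_mul a).cexp).const_mul _)
    rw [h.deriv]; ring

lemma sumderiv (s : Finset ℕ) (c a : ℕ → ℂ) (k : ℕ) :
    iteratedDeriv k (fun x : ℂ => ∑ j ∈ s, c j * Complex.exp (a j * x)) =
      fun θ => ∑ j ∈ s, c j * (a j) ^ k * Complex.exp (a j * θ) := by
  induction k with
  | zero => simp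
  | succ k ih =>
    rw [iteratedDeriv_succ, ih]
    funext θ
    have h : HasDerivAt (fun θ : ℂ => ∑ j ∈ s, c j * (a j) ^ k * Complex.exp (a j * θ))
        (∑ j ∈ s, c j * (a j) ^ k * (Complex.exp (a j * θ) * (a j * 1))) θ := by
        simpa using
      HasDerivAt.fun_sum fun j _ => (((hasDerivAt_id θ).const_mul (a j)).cexp).const_mul _
    rw [h.deriv]
    exact Finset.sum_congr rfl fun j _ => by ring

lemma sinpow (n : ℕ) (x : ℂ) :
    (2 * Complex.I) ^ n * Complex.sin (x / 2) ^ n =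
      ∑ j ∈ Finset.range (n + 1),
        ((-1 : ℂ) ^ (n - j) * (n.choose j : ℂ)) * Complex.exp (((j : ℂ) - n / 2) * Complex.I * x) := by
  have h1 : 2 * Complex.I * Complex.sin (x / 2) =
      Complex.exp (x / 2 * Complex.I) - Complex.exp (-(x / 2) * Complex.I) := by
    rw [Complex.sin]; ring_nf
    rw [Complex.I_sq]; ring
  rw [← mul_pow, h1, sub_pow]
  refine Finset.sum_congr rfl fun j hj => ?_
  have hjn : j ≤ n := by simpa [Nat.lt_succ_iff] using Finset.mem_range.mp hj
  have hsign : ((-1 : ℂ)) ^ (j + n) = (-1) ^ (n - j) := by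
    rw [show j + n = (n - j) + 2 * j by omega, pow_add, pow_mul]; simp
  rw [← Complex.exp_nat_mul, ← Complex.exp_nat_mul, hsign]
  have he : Complex.exp ((j:ℂ) * (x / 2 * Complex.I)) *
      Complex.exp (((n - j : ℕ):ℂ) * (-(x / 2) * Complex.I)) =
      Complex.exp (((j : ℂ) - n / 2) * Complex.I * x) := by
    rw [← Complex.exp_add]
    congr 1
    push_cast [Nat.cast_sub hjn]
    ring
  calc (-1:ℂ) ^ (n - j) * Complex.exp ((j:ℂ) * (x / 2 * Complex.I)) *
        Complex.exp (((n - j : ℕ):ℂ) * (-(x / 2) * Complex.I)) * (n.choose j : ℂ)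
      = (-1) ^ (n - j) * (n.choose j : ℂ) *
        (Complex.exp ((j:ℂ) * (x / 2 * Complex.I)) *
         Complex.exp (((n - j : ℕ):ℂ) * (-(x / 2) * Complex.I))) := by ring
    _ = _ := by rw [he]

noncomputable def circLaguerre (n k : ℕ) : Polynomial ℂ :=
  ∑ j ∈ Finset.range (n + 1),
    Polynomial.C (Complex.I ^ k * (-1) ^ (n - j) * (n.choose j : ℂ) * ((j : ℂ) - n / 2) ^ k) *
      Polynomial.X ^ j

theorem stmt5 (n k : ℕ) (θ : ℂ) :
    (circLaguerre n k).eval (Complex.exp (Complex.I * θ)) =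
      Complex.exp (Complex.I * n * θ / 2) * (2 * Complex.I) ^ n *
        iteratedDeriv k (fun x : ℂ => (Complex.sin (x / 2)) ^ n) θ := by
  have h2 : (2 * Complex.I) ^ n ≠ 0 := by
    simp [Complex.I_ne_zero]
  have key : (fun x : ℂ => (Complex.sin (x / 2)) ^ n) =
      fun x => ∑ j ∈ Finset.range (n + 1),
        ((-1 : ℂ) ^ (n - j) * (n.choose j : ℂ) / (2 * Complex.I) ^ n) *
          Complex.exp ((((j : ℂ) - n / 2) * Complex.I) * x) := by
    funext x
    calc (Complex.sin (x / 2)) ^ n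
        = ((2 * Complex.I) ^ n * Complex.sin (x / 2) ^ n) / (2 * Complex.I) ^ n := by
          field_simp
      _ = (∑ j ∈ Finset.range (n + 1),
            ((-1 : ℂ) ^ (n - j) * (n.choose j : ℂ)) *
              Complex.exp (((j : ℂ) - n / 2) * Complex.I * x)) / (2 * Complex.I) ^ n := by
          rw [sinpow]
      _ = _ := by
          rw [Finset.sum_div]
          exact Finset.sum_congr rfl fun j _ => by ring
  rw [key, sumderiv (Finset.range (n + 1))
    (fun j => (-1 : ℂ) ^ (n - j) * (n.choose j : ℂ) / (2 * Complex.I) ^ n)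
    (fun j => ((j : ℂ) - n / 2) * Complex.I) k]
  simp only [circLaguerre, Polynomial.eval_finset_sum, Polynomial.eval_mul, Polynomial.eval_C,
    Polynomial.eval_pow, Polynomial.eval_X, Finset.mul_sum]
  refine Finset.sum_congr rfl fun j _ => ?_
  rw [show Complex.exp (Complex.I * θ) ^ j =
      Complex.exp (Complex.I * n * θ / 2) * Complex.exp (((j : ℂ) - n / 2) * Complex.I * θ) from by
    rw [← Complex.exp_nat_mul, ← Complex.exp_add]; ring_nf]
  rw [mul_pow]
  field_simp
  rw [div_pow, div_pow, mul_pow]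
  ring
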